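/- Let n ≥ 2 be an integer and p an integer with 1 ≤ p ≤ n−1, and let Ψ(y) = [[2y−1, 1],[1, 2y−1]]. For every twice differentiable P : (0,1) → ℂ² and every y ∈ (0,1): y(1−y)(ΨP)″(y) + (n/2)(1−2y)(ΨP)′(y) + (((1−2y)²+1)/(4y(1−y)))·diag(p−n, −p)·(ΨP)(y) + ((1−2y)/(2y(1−y)))·[[0, p−n],[−p, 0]]·(ΨP)(y) = Ψ(y)·[ y(1−y)P″(y) − [[(n/2+1)(2y−1), −1],[−1, (n/2+1)(2y−1)]]·P′(y) − diag(p, n−p)·P(y) ]. Consequently, since Ψ(y) is invertible for y ∈ (0,1), for any λ ∈ ℂ the function H = ΨP satisfies the left-hand operator equation with eigenvalue λ if and only if y(1−y)P″ − [[(n/2+1)(2y−1), −1],[−1, (n/2+1)(2y−1)]]P′ − diag(p, n−p)P = λP on (0,1). -/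

import Mathlib

namespace Stmt14

/-- `Ψ(y) = [[2y-1, 1], [1, 2y-1]]`. -/
noncomputable def Psi2 (y : ℝ) : Matrix (Fin 2) (Fin 2) ℂ :=
  !![2*(y:ℂ)-1, 1; 1, 2*(y:ℂ)-1]

/-- The left-hand side operator
`y(1-y)H'' + (n/2)(1-2y)H' + (((1-2y)²+1)/(4y(1-y))) diag(p-n,-p) H
  + ((1-2y)/(2y(1-y))) [[0,p-n],[-p,0]] H`. -/
noncomputable def lhsOp (n p : ℕ) (H : ℝ → Fin 2 → ℂ) (y : ℝ) : Fin 2 → ℂ :=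
  ((y:ℂ) * (1 - (y:ℂ))) • deriv (deriv H) y
    + ((n:ℂ)/2 * (1 - 2*(y:ℂ))) • deriv H y
    + (((1 - 2*(y:ℂ))^2 + 1) / (4*(y:ℂ)*(1 - (y:ℂ)))) •
        (Matrix.diagonal ![(p:ℂ) - (n:ℂ), -(p:ℂ)]).mulVec (H y)
    + ((1 - 2*(y:ℂ)) / (2*(y:ℂ)*(1 - (y:ℂ)))) •
        (!![0, (p:ℂ) - (n:ℂ); -(p:ℂ), 0]).mulVec (H y)

/-- The conjugated (hypergeometric) operator
`y(1-y)P'' - [[(n/2+1)(2y-1),-1],[-1,(n/2+1)(2y-1)]]P' - diag(p, n-p) P`. -/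
noncomputable def rhsOp (n p : ℕ) (P : ℝ → Fin 2 → ℂ) (y : ℝ) : Fin 2 → ℂ :=
  ((y:ℂ) * (1 - (y:ℂ))) • deriv (deriv P) y
    - (!![((n:ℂ)/2 + 1)*(2*(y:ℂ)-1), -1; -1, ((n:ℂ)/2 + 1)*(2*(y:ℂ)-1)]).mulVec (deriv P y)
    - (Matrix.diagonal ![(p:ℂ), (n:ℂ) - (p:ℂ)]).mulVec (P y)

lemma cast_hasDerivAt (z : ℝ) : HasDerivAt (fun t : ℝ => (t:ℂ)) 1 z := by
  simpa using (hasDerivAt_id z).ofReal_comp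

/-- First derivative of `ΨP`. -/
noncomputable def Dfun (P : ℝ → Fin 2 → ℂ) (z : ℝ) : Fin 2 → ℂ :=
  ![2 * P z 0 + (2*(z:ℂ)-1) * deriv P z 0 + deriv P z 1,
    2 * P z 1 + deriv P z 0 + (2*(z:ℂ)-1) * deriv P z 1]

/-- Second derivative of `ΨP`. -/
noncomputable def Efun (P : ℝ → Fin 2 → ℂ) (z : ℝ) : Fin 2 → ℂ :=
  ![4 * deriv P z 0 + (2*(z:ℂ)-1) * deriv (deriv P) z 0 + deriv (deriv P) z 1,
    4 * deriv P z 1 + deriv (deriv P) z 0 + (2*(z:ℂ)-1) * deriv (deriv P) z 1]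

lemma hasDerivH (P : ℝ → Fin 2 → ℂ) (z : ℝ) (h : DifferentiableAt ℝ P z) :
    HasDerivAt (fun t => (Psi2 t).mulVec (P t)) (Dfun P z) z := by
  have h0 : HasDerivAt (fun t => P t 0) (deriv P z 0) z := hasDerivAt_pi.1 h.hasDerivAt 0
  have h1 : HasDerivAt (fun t => P t 1) (deriv P z 1) z := hasDerivAt_pi.1 h.hasDerivAt 1
  have hc : HasDerivAt (fun t : ℝ => 2*(t:ℂ)-1) 2 z := by
    simpa using ((cast_hasDerivAt z).const_mul 2).sub_const 1
  rw [hasDerivAt_pi]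
  intro i
  fin_cases i
  · simp only [Dfun, Psi2, Matrix.mulVec, dotProduct, Fin.sum_univ_two,
      Matrix.cons_val', Matrix.cons_val_zero, Matrix.cons_val_one, Matrix.head_cons,
      Matrix.empty_val', Matrix.cons_val_fin_one, Fin.isValue, Fin.mk_zero, Fin.mk_one,
      Matrix.of_apply]
    convert (hc.mul h0).add (h1.const_mul 1) using 1
    · funext t; simp only [Pi.add_apply, Pi.mul_apply]
    ring
  · simp only [Dfun, Psi2, Matrix.mulVec, dotProduct, Fin.sum_univ_two,
      Matrix.cons_val', Matrix.cons_val_zero, Matrix.cons_val_one, Matrix.head_cons,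
      Matrix.empty_val', Matrix.cons_val_fin_one, Fin.isValue, Fin.mk_zero, Fin.mk_one,
      Matrix.of_apply]
    convert (h0.const_mul 1).add (hc.mul h1) using 1
    · funext t; simp only [Pi.add_apply, Pi.mul_apply]
    ring

lemma hasDerivD (P : ℝ → Fin 2 → ℂ) (z : ℝ) (h : DifferentiableAt ℝ P z)
    (h' : DifferentiableAt ℝ (deriv P) z) :
    HasDerivAt (Dfun P) (Efun P z) z := by
  have h0 : HasDerivAt (fun t => P t 0) (deriv P z 0) z := hasDerivAt_pi.1 h.hasDerivAt 0
  have h1 : HasDerivAt (fun t => P t 1) (deriv P z 1) z := hasDerivAt_pi.1 h.hasDerivAt 1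
  have d0 : HasDerivAt (fun t => deriv P t 0) (deriv (deriv P) z 0) z :=
    hasDerivAt_pi.1 h'.hasDerivAt 0
  have d1 : HasDerivAt (fun t => deriv P t 1) (deriv (deriv P) z 1) z :=
    hasDerivAt_pi.1 h'.hasDerivAt 1
  have hc : HasDerivAt (fun t : ℝ => 2*(t:ℂ)-1) 2 z := by
    simpa using ((cast_hasDerivAt z).const_mul 2).sub_const 1
  rw [hasDerivAt_pi]
  intro i
  fin_cases i
  · simp only [Dfun, Efun, Matrix.cons_val_zero, Fin.mk_zero, Fin.isValue]
    convert ((h0.const_mul 2).add (hc.mul d0)).add d1 using 1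
    · funext t; simp only [Pi.add_apply, Pi.mul_apply]
    ring
  · simp only [Dfun, Efun, Matrix.cons_val_one, Matrix.head_cons, Matrix.cons_val_zero, Fin.mk_one, Fin.isValue]
    convert ((h1.const_mul 2).add d0).add (hc.mul d1) using 1
    · funext t; simp only [Pi.add_apply, Pi.mul_apply]
    ring

lemma key0 (y a b a' b' a'' b'' N Q : ℂ) (h1 : y ≠ 0) (h2 : 1 - y ≠ 0) :
  y*(1-y)*(4*a' + (2*y-1)*a'' + b'') + N/2*(1-2*y)*(2*a + (2*y-1)*a' + b')
    + ((1-2*y)^2+1)/(4*y*(1-y)) * ((Q-N)*((2*y-1)*a + b))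
    + (1-2*y)/(2*y*(1-y)) * ((Q-N)*(a + (2*y-1)*b))
  = (2*y-1)*(y*(1-y)*a'' - ((N/2+1)*(2*y-1)*a' - b') - Q*a)
    + (y*(1-y)*b'' - (-a' + (N/2+1)*(2*y-1)*b') - (N-Q)*b) := by
  have h2' : (2:ℂ)*y*(1-y) ≠ 0 := mul_ne_zero (mul_ne_zero two_ne_zero h1) h2
  have e1 : ((1-2*y)^2+1)/(4*y*(1-y)) = 1/(2*y*(1-y)) - 1 := by
    field_simp
    ring
  have hs : 1/(2*y*(1-y)) * (2*y*(1-y)) = 1 := div_mul_cancel₀ 1 h2'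
  rw [e1]
  linear_combination (2*(Q-N)*b) * hs

lemma key1 (y a b a' b' a'' b'' N Q : ℂ) (h1 : y ≠ 0) (h2 : 1 - y ≠ 0) :
  y*(1-y)*(4*b' + a'' + (2*y-1)*b'') + N/2*(1-2*y)*(2*b + a' + (2*y-1)*b')
    + ((1-2*y)^2+1)/(4*y*(1-y)) * (-Q*(a + (2*y-1)*b))
    + (1-2*y)/(2*y*(1-y)) * (-Q*((2*y-1)*a + b))
  = (y*(1-y)*a'' - ((N/2+1)*(2*y-1)*a' - b') - Q*a)
    + (2*y-1)*(y*(1-y)*b'' - (-a' + (N/2+1)*(2*y-1)*b') - (N-Q)*b) := by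
  have h2' : (2:ℂ)*y*(1-y) ≠ 0 := mul_ne_zero (mul_ne_zero two_ne_zero h1) h2
  have e1 : ((1-2*y)^2+1)/(4*y*(1-y)) = 1/(2*y*(1-y)) - 1 := by
    field_simp
    ring
  have hs : 1/(2*y*(1-y)) * (2*y*(1-y)) = 1 := div_mul_cancel₀ 1 h2'
  rw [e1]
  linear_combination (-2*Q*a) * hs

/-- Hypergeometrization of the spherical function equation for fundamental
`K`-types: the identity of operators under `H = ΨP`, and the resulting eigenvalue
equivalence. -/
theorem hypergeometrization (n p : ℕ) (hn : 2 ≤ n) (hp1 : 1 ≤ p) (hp2 : p ≤ n - 1)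
    (P : ℝ → Fin 2 → ℂ)
    (hP : ∀ y ∈ Set.Ioo (0:ℝ) 1, DifferentiableAt ℝ P y)
    (hP' : ∀ y ∈ Set.Ioo (0:ℝ) 1, DifferentiableAt ℝ (deriv P) y)
    (H : ℝ → Fin 2 → ℂ) (hH : ∀ y, H y = (Psi2 y).mulVec (P y)) :
    (∀ y ∈ Set.Ioo (0:ℝ) 1, lhsOp n p H y = (Psi2 y).mulVec (rhsOp n p P y)) ∧
    ∀ lam : ℂ,
      ((∀ y ∈ Set.Ioo (0:ℝ) 1, lhsOp n p H y = lam • H y) ↔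
        (∀ y ∈ Set.Ioo (0:ℝ) 1, rhsOp n p P y = lam • P y)) := by
  have hHfun : H = fun t => (Psi2 t).mulVec (P t) := funext hH
  have main : ∀ y ∈ Set.Ioo (0:ℝ) 1, lhsOp n p H y = (Psi2 y).mulVec (rhsOp n p P y) := by
    intro y hy
    have hy0 : (y:ℂ) ≠ 0 := by exact_mod_cast ne_of_gt hy.1
    have hy1 : (1:ℂ) - (y:ℂ) ≠ 0 := by
      have : (y:ℂ) ≠ 1 := by exact_mod_cast ne_of_lt hy.2
      exact sub_ne_zero.2 (Ne.symm this)
    -- first derivative of H on a neighborhood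
    have hd1 : ∀ z ∈ Set.Ioo (0:ℝ) 1, deriv H z = Dfun P z := by
      intro z hz
      rw [hHfun]
      exact (hasDerivH P z (hP z hz)).deriv
    have heq : deriv H =ᶠ[nhds y] Dfun P :=
      Filter.eventuallyEq_of_mem (isOpen_Ioo.mem_nhds hy) hd1
    have hd2 : deriv (deriv H) y = Efun P y := by
      have : HasDerivAt (deriv H) (Efun P y) y :=
        (hasDerivD P y (hP y hy) (hP' y hy)).congr_of_eventuallyEq heq
      exact this.deriv
    rw [lhsOp, rhsOp, hd2, hd1 y hy, hH y]
    funext i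
    fin_cases i
    · simp only [Dfun, Efun, Psi2, Matrix.mulVec, dotProduct, Fin.sum_univ_two,
        Matrix.cons_val', Matrix.cons_val_zero, Matrix.cons_val_one, Matrix.head_cons,
        Matrix.empty_val', Matrix.cons_val_fin_one, Fin.isValue, Fin.mk_zero, Fin.mk_one,
        Matrix.of_apply, Matrix.diagonal_apply, Pi.add_apply, Pi.smul_apply, Pi.sub_apply,
        smul_eq_mul, if_true, if_false, Matrix.diagonal_apply_eq, Matrix.vecHead, Matrix.vecTail]
      norm_num
      linear_combination key0 y (P y 0) (P y 1) (deriv P y 0) (deriv P y 1)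
        (deriv (deriv P) y 0) (deriv (deriv P) y 1) n p hy0 hy1
    · simp only [Dfun, Efun, Psi2, Matrix.mulVec, dotProduct, Fin.sum_univ_two,
        Matrix.cons_val', Matrix.cons_val_zero, Matrix.cons_val_one, Matrix.head_cons,
        Matrix.empty_val', Matrix.cons_val_fin_one, Fin.isValue, Fin.mk_zero, Fin.mk_one,
        Matrix.of_apply, Matrix.diagonal_apply, Pi.add_apply, Pi.smul_apply, Pi.sub_apply,
        smul_eq_mul, if_true, if_false, Matrix.diagonal_apply_eq, Matrix.vecHead, Matrix.vecTail]
      norm_num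
      linear_combination key1 y (P y 0) (P y 1) (deriv P y 0) (deriv P y 1)
        (deriv (deriv P) y 0) (deriv (deriv P) y 1) n p hy0 hy1
  refine ⟨main, fun lam => ⟨?_, ?_⟩⟩
  · intro h y hy
    have hy0 : (y:ℂ) ≠ 0 := by exact_mod_cast ne_of_gt hy.1
    have hy1ne : (y:ℂ) ≠ 1 := by exact_mod_cast ne_of_lt hy.2
    have hdet : IsUnit (Psi2 y).det := by
      rw [Psi2, Matrix.det_fin_two_of]
      have hval : (2*(y:ℂ)-1) * (2*(y:ℂ)-1) - 1 * 1 = 4*(y:ℂ)*((y:ℂ)-1) := by ring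
      rw [hval, isUnit_iff_ne_zero]
      exact mul_ne_zero (mul_ne_zero (by norm_num) hy0) (sub_ne_zero.2 hy1ne)
    have hinj : Function.Injective (Psi2 y).mulVec :=
      Matrix.mulVec_injective_iff_isUnit.2 ((Matrix.isUnit_iff_isUnit_det _).2 hdet)
    apply hinj
    have h1 := (main y hy).symm.trans (h y hy)
    rw [hH y, ← Matrix.mulVec_smul] at h1
    exact h1
  · intro h y hy
    rw [main y hy, h y hy, Matrix.mulVec_smul, hH y]

end Stmt14
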